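/- Backward uniqueness: let $u$ be a smooth solution of $\partial_t u = \mathcal{L}_\phi u$ on a closed Riemannian manifold $M$ for $t \in [a,b]$. If $u(\cdot, b) \equiv 0$, then $u \equiv 0$ on $M \times [a,b]$. -/

import Mathlib

/- STATEMENT 7.  Backward uniqueness in the abstract closed-manifold setting
(μ = e^{-φ} dV_g, gradu = ∇u, Lu = 𝓛_φ u, gradLu = ∇𝓛_φ u): if u(·,b) ≡ 0 then
u ≡ 0 on M × [a,b] (μ-a.e. at each time, i.e. u ≡ 0 in L²(e^{-φ})). -/
open MeasureTheory
open scoped RealInnerProductSpace Topology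

theorem backward_uniqueness
    {M : Type*} [MeasurableSpace M] (μ : Measure M) [IsFiniteMeasure μ]
    {V : Type*} [NormedAddCommGroup V] [InnerProductSpace ℝ V]
    (a b : ℝ) (hab : a ≤ b)
    (u Lu : ℝ → M → ℝ) (gradu gradLu : ℝ → M → V)
    (hu2 : ∀ t, Integrable (fun x => (u t x) ^ 2) μ)
    (hgrad2 : ∀ t, Integrable (fun x => ‖gradu t x‖ ^ 2) μ)
    (hLu2 : ∀ t, Integrable (fun x => (Lu t x) ^ 2) μ)
    (huLu : ∀ t, Integrable (fun x => u t x * Lu t x) μ)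
    (hgg : ∀ t, Integrable (fun x => ⟪gradu t x, gradLu t x⟫) μ)
    -- the drift heat equation ∂ₜ u = 𝓛_φ u
    (hheat : ∀ x t, HasDerivAt (fun s => u s x) (Lu t x) t)
    -- self-adjointness of 𝓛_φ (integration by parts on the closed manifold)
    (hibp : ∀ t, ∫ x, u t x * Lu t x ∂μ = -∫ x, ‖gradu t x‖ ^ 2 ∂μ)
    (hibp2 : ∀ t, ∫ x, ⟪gradu t x, gradLu t x⟫ ∂μ = -∫ x, (Lu t x) ^ 2 ∂μ)
    -- differentiation under the integral sign for I and D
    (hDI : ∀ t ∈ Set.Icc a b,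
      HasDerivAt (fun s => ∫ x, (u s x) ^ 2 ∂μ)
        (∫ x, 2 * (u t x * Lu t x) ∂μ) t)
    (hDD : ∀ t ∈ Set.Icc a b,
      HasDerivAt (fun s => -∫ x, ‖gradu s x‖ ^ 2 ∂μ)
        (-∫ x, 2 * ⟪gradu t x, gradLu t x⟫ ∂μ) t)
    -- u vanishes at the final time b
    (hb : ∀ x, u b x = 0) :
    ∀ t ∈ Set.Icc a b, ∀ᵐ x ∂μ, u t x = 0 := by
  set I : ℝ → ℝ := fun t => ∫ x, (u t x) ^ 2 ∂μ with hIdef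
  set J : ℝ → ℝ := fun t => ∫ x, u t x * Lu t x ∂μ with hJdef
  set E : ℝ → ℝ := fun t => ∫ x, (Lu t x) ^ 2 ∂μ with hEdef
  have hInonneg : ∀ t, 0 ≤ I t := fun t => integral_nonneg fun x => sq_nonneg _
  have hEnonneg : ∀ t, 0 ≤ E t := fun t => integral_nonneg fun x => sq_nonneg _
  have hIb : I b = 0 := by simp [hIdef, hb]
  -- derivative of I
  have hI' : ∀ t ∈ Set.Icc a b, HasDerivAt I (2 * J t) t := by
    intro t ht
    have := hDI t ht
    rwa [integral_const_mul] at this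
  -- derivative of J
  have hJ' : ∀ t ∈ Set.Icc a b, HasDerivAt J (2 * E t) t := by
    intro t ht
    have hJeq : J = fun s => -∫ x, ‖gradu s x‖ ^ 2 ∂μ := funext fun s => hibp s
    have := hDD t ht
    rw [integral_const_mul, hibp2 t] at this
    rw [hJeq]
    convert this using 1
    ring
  -- Cauchy-Schwarz : J t ^ 2 ≤ I t * E t
  have hCS : ∀ t, J t ^ 2 ≤ I t * E t := by
    intro t
    have hquad : ∀ lam : ℝ, 0 ≤ E t * (lam * lam) + (2 * J t) * lam + I t := by
      intro lam
      have h0 : 0 ≤ ∫ x, (lam * Lu t x + u t x) ^ 2 ∂μ :=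
        integral_nonneg fun x => sq_nonneg _
      have hexp : (fun x => (lam * Lu t x + u t x) ^ 2)
          = fun x => (lam * lam) * (Lu t x) ^ 2 + ((2 * lam) * (u t x * Lu t x) + (u t x) ^ 2) := by
        funext x; ring
      have hint1 : Integrable (fun x => (lam * lam) * (Lu t x) ^ 2) μ := (hLu2 t).const_mul _
      have hint2 : Integrable (fun x => (2 * lam) * (u t x * Lu t x)) μ := (huLu t).const_mul _
      have hint3 : Integrable (fun x => (2 * lam) * (u t x * Lu t x) + (u t x) ^ 2) μ :=
        hint2.add (hu2 t)
      rw [hexp, integral_add hint1 hint3, integral_add hint2 (hu2 t),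
        integral_const_mul, integral_const_mul] at h0
      calc (0:ℝ) ≤ lam * lam * E t + (2 * lam * J t + I t) := h0
        _ = E t * (lam * lam) + (2 * J t) * lam + I t := by ring
    have := discrim_le_zero hquad
    rw [discrim] at this
    nlinarith [this]
  -- Main claim: I vanishes on [a,b]
  have hIzero : ∀ t ∈ Set.Icc a b, I t = 0 := by
    intro t₀ ht₀
    by_contra hne
    have hpos : 0 < I t₀ := lt_of_le_of_ne (hInonneg t₀) (Ne.symm hne)
    have ht₀b : t₀ < b := lt_of_le_of_ne ht₀.2 (by rintro rfl; exact hne hIb)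
    -- continuity of I on [a,b]
    have hIcont : ContinuousOn I (Set.Icc a b) := fun t ht =>
      ((hI' t ht).continuousAt).continuousWithinAt
    -- first zero after t₀
    set S : Set ℝ := Set.Icc t₀ b ∩ I ⁻¹' {0} with hSdef
    have hScl : IsClosed S := by
      have hsub : Set.Icc t₀ b ⊆ Set.Icc a b := Set.Icc_subset_Icc ht₀.1 le_rfl
      exact (hIcont.mono hsub).preimage_isClosed_of_isClosed isClosed_Icc isClosed_singleton
    have hSne : S.Nonempty := ⟨b, ⟨le_of_lt ht₀b, le_rfl⟩, hIb⟩
    have hSbdd : BddBelow S := ⟨t₀, fun s hs => hs.1.1⟩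
    set c : ℝ := sInf S with hcdef
    have hcS : c ∈ S := hScl.csInf_mem hSne hSbdd
    have hIc : I c = 0 := hcS.2
    have ht₀c : t₀ < c := by
      rcases lt_or_eq_of_le hcS.1.1 with h | h
      · exact h
      · exact absurd (h ▸ hIc) hne
    have hcb : c ≤ b := hcS.1.2
    have hsubab : Set.Icc t₀ c ⊆ Set.Icc a b :=
      Set.Icc_subset_Icc ht₀.1 hcb
    -- I > 0 on [t₀, c)
    have hIpos : ∀ t ∈ Set.Ico t₀ c, 0 < I t := by
      intro t ht
      rcases lt_or_eq_of_le (hInonneg t) with h | h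
      · exact h
      · exfalso
        have : t ∈ S := ⟨⟨ht.1, le_trans (le_of_lt ht.2) hcb⟩, h.symm⟩
        exact absurd (csInf_le hSbdd this) (not_le.mpr ht.2)
    -- f = (log I)' = 2 J / I is monotone on [t₀, c)
    set f : ℝ → ℝ := fun t => 2 * J t / I t with hfdef
    have hfderiv : ∀ t ∈ Set.Ico t₀ c, HasDerivAt f
        ((2 * (2 * E t) * I t - 2 * J t * (2 * J t)) / (I t) ^ 2) t := by
      intro t ht
      have htab : t ∈ Set.Icc a b := hsubab ⟨ht.1, le_of_lt ht.2⟩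
      exact ((hJ' t htab).const_mul 2).div (hI' t htab) (ne_of_gt (hIpos t ht))
    have hfmono : MonotoneOn f (Set.Ico t₀ c) := by
      apply monotoneOn_of_deriv_nonneg (convex_Ico t₀ c)
      · exact fun t ht => (hfderiv t ht).continuousAt.continuousWithinAt
      · intro t ht
        rw [interior_Ico] at ht
        exact (hfderiv t ⟨le_of_lt ht.1, ht.2⟩).differentiableAt.differentiableWithinAt
      · intro t ht
        rw [interior_Ico] at ht
        have ht' : t ∈ Set.Ico t₀ c := ⟨le_of_lt ht.1, ht.2⟩
        rw [(hfderiv t ht').deriv]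
        have hcs := hCS t
        have h1 : 0 < I t := hIpos t ht'
        have h2 : (0:ℝ) < I t ^ 2 := by positivity
        apply div_nonneg _ (le_of_lt h2)
        nlinarith [hcs]
    -- F = log I - f t₀ * t is monotone on [t₀, c)
    set F : ℝ → ℝ := fun t => Real.log (I t) - f t₀ * t with hFdef
    have hFderiv : ∀ t ∈ Set.Ico t₀ c, HasDerivAt F (2 * J t / I t - f t₀) t := by
      intro t ht
      have htab : t ∈ Set.Icc a b := hsubab ⟨ht.1, le_of_lt ht.2⟩
      have hlog : HasDerivAt (fun s => Real.log (I s)) (2 * J t / I t) t :=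
        (hI' t htab).log (ne_of_gt (hIpos t ht))
      have hsub := hlog.sub ((hasDerivAt_id t).const_mul (f t₀))
      simp only [mul_one] at hsub
      exact hsub
    have hFmono : MonotoneOn F (Set.Ico t₀ c) := by
      apply monotoneOn_of_deriv_nonneg (convex_Ico t₀ c)
      · exact fun t ht => (hFderiv t ht).continuousAt.continuousWithinAt
      · intro t ht
        rw [interior_Ico] at ht
        exact (hFderiv t ⟨le_of_lt ht.1, ht.2⟩).differentiableAt.differentiableWithinAt
      · intro t ht
        rw [interior_Ico] at ht
        have ht' : t ∈ Set.Ico t₀ c := ⟨le_of_lt ht.1, ht.2⟩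
        rw [(hFderiv t ht').deriv]
        have : f t₀ ≤ f t := hfmono ⟨le_rfl, ht₀c⟩ ht' ht'.1
        simpa [hfdef] using sub_nonneg.mpr this
    -- lower bound for I on [t₀, c)
    set m : ℝ := Real.log (I t₀) - |f t₀| * (c - t₀) with hmdef
    have hlb : ∀ t ∈ Set.Ico t₀ c, Real.exp m ≤ I t := by
      intro t ht
      have hF : F t₀ ≤ F t := hFmono ⟨le_rfl, ht₀c⟩ ht ht.1
      have hlog : Real.log (I t₀) + f t₀ * (t - t₀) ≤ Real.log (I t) := by
        have := hF
        simp only [hFdef] at this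
        linarith
      have habs : -( |f t₀| * (c - t₀)) ≤ f t₀ * (t - t₀) := by
        have h1 : 0 ≤ t - t₀ := sub_nonneg.mpr ht.1
        have h2 : t - t₀ ≤ c - t₀ := by linarith [le_of_lt ht.2]
        calc -( |f t₀| * (c - t₀)) ≤ -( |f t₀| * (t - t₀)) := by
              have := abs_nonneg (f t₀)
              nlinarith
          _ ≤ f t₀ * (t - t₀) := by
              have := neg_abs_le (f t₀)
              nlinarith
      have : m ≤ Real.log (I t) := by
        simp only [hmdef]; linarith
      calc Real.exp m ≤ Real.exp (Real.log (I t)) := Real.exp_le_exp.mpr this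
        _ = I t := Real.exp_log (hIpos t ht)
    -- take the limit t → c⁻ : exp m ≤ I c = 0, contradiction
    have hIcontc : ContinuousAt I c :=
      (hI' c (hsubab ⟨le_of_lt ht₀c, le_rfl⟩)).continuousAt
    have hne' : (𝓝[Set.Ioo t₀ c] c).NeBot := right_nhdsWithin_Ioo_neBot ht₀c
    have htend : Filter.Tendsto I (𝓝[Set.Ioo t₀ c] c) (𝓝 (I c)) :=
      hIcontc.continuousWithinAt.tendsto
    have hfinal : Real.exp m ≤ I c := by
      refine ge_of_tendsto htend ?_
      filter_upwards [self_mem_nhdsWithin] with t ht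
      exact hlb t ⟨le_of_lt ht.1, ht.2⟩
    rw [hIc] at hfinal
    exact absurd hfinal (not_le.mpr (Real.exp_pos m))
  -- conclude : u t = 0 a.e.
  intro t ht
  have h0 : I t = 0 := hIzero t ht
  have := (integral_eq_zero_iff_of_nonneg (fun x => sq_nonneg (u t x)) (hu2 t)).mp h0
  filter_upwards [this] with x hx
  have : u t x ^ 2 = 0 := hx
  exact pow_eq_zero_iff (n := 2) (by norm_num) |>.mp this
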